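/- Let 0 < σ_ε < σ_T < ∞, α ∈ ℝ, and let μ_data be a compactly supported probability measure on ℝ^d. Define s_*(x) as the quotient of ∫ Φ_{σ_ε}^{σ_T}((d+α)/2, |x−x̃|²/2)(x̃−x) dμ_data(x̃) by ∫ Φ_{σ_ε}^{σ_T}((d+2α−2)/2, |x−x̃|²/2) dμ_data(x̃). Then |s_*(x)|/|x| converges uniformly to σ_T^{α−2} as |x| → ∞: lim_{R→∞} sup_{|x|≥R} | |s_*(x)|/|x| − σ_T^{α−2} | = 0. -/

import Mathlib

open MeasureTheory Real Filter

/-- `Φ a b s z = ∫_{1/b²}^{1/a²} u^(s-1) e^{-z u} du`. -/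
noncomputable def Phi (a b s z : ℝ) : ℝ :=
  ∫ u in (1 / b ^ 2)..(1 / a ^ 2), u ^ (s - 1) * Real.exp (-z * u)

lemma integral_exp_neg_mul (z p q : ℝ) (hz : z ≠ 0) :
    ∫ u in p..q, Real.exp (-z * u) = (Real.exp (-z * p) - Real.exp (-z * q)) / z := by
  have h : ∀ u ∈ Set.uIcc p q, HasDerivAt (fun t => -Real.exp (-z * t) / z)
      (Real.exp (-z * u)) u := by
    intro u _
    have h1 : HasDerivAt (fun t : ℝ => -z * t) (-z) u := by
      simpa using (hasDerivAt_id u).const_mul (-z)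
    have h3 : HasDerivAt (fun t => -(Real.exp (-z * t) / z)) (-(Real.exp (-z * u) * -z / z)) u :=
      (h1.exp.div_const z).neg
    convert h3 using 1
    · funext t; rw [neg_div]
    · rw [mul_neg, neg_div, neg_neg, mul_div_assoc, div_self hz, mul_one]
  have hc : ContinuousOn (fun u => Real.exp (-z * u)) (Set.uIcc p q) :=
    (Real.continuous_exp.comp (continuous_const.mul continuous_id)).continuousOn
  have := intervalIntegral.integral_eq_sub_of_hasDerivAt h (hc.intervalIntegrable)
  rw [this]
  field_simp
  ring

lemma Phi_key (a b s : ℝ) (ha : 0 < a) (hab : a < b) {η : ℝ} (hη : 0 < η) :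
    ∃ Z : ℝ, 0 < Z ∧ ∀ z, Z ≤ z →
      |z * Real.exp (z * (1 / b ^ 2)) * Phi a b s z - (1 / b ^ 2) ^ (s - 1)| ≤ η := by
  have hb : 0 < b := ha.trans hab
  set c : ℝ := 1 / b ^ 2 with hc_def
  set L : ℝ := 1 / a ^ 2 with hL_def
  have hc : 0 < c := by positivity
  have hcL : c < L := by
    apply div_lt_div_of_pos_left one_pos (by positivity)
    nlinarith
  set P : ℝ := c ^ (s - 1) with hP_def
  have hP : 0 < P := Real.rpow_pos_of_pos hc _
  set Mf : ℝ := max (c ^ (s - 1)) (L ^ (s - 1)) with hMf_def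
  have hMf0 : 0 < Mf := lt_max_of_lt_left hP
  have hfMf : ∀ u ∈ Set.Icc c L, u ^ (s - 1) ≤ Mf := by
    intro u hu
    rcases le_or_gt 0 (s - 1) with h | h
    · exact le_trans (Real.rpow_le_rpow (hc.le.trans hu.1) hu.2 h) (le_max_right _ _)
    · exact le_trans (Real.rpow_le_rpow_of_nonpos hc hu.1 h.le) (le_max_left _ _)
  -- continuity at c
  have hcont : ContinuousAt (fun u : ℝ => u ^ (s - 1)) c :=
    Real.continuousAt_rpow_const c (s - 1) (Or.inl hc.ne')
  obtain ⟨δ0, hδ0, hδ0P⟩ := Metric.continuousAt_iff.mp hcont (η / 2) (by positivity)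
  set δ : ℝ := min (δ0 / 2) (L - c) with hδ_def
  have hδ : 0 < δ := lt_min (by positivity) (by linarith)
  have hδL : c + δ ≤ L := by
    have := min_le_right (δ0 / 2) (L - c); simp only [← hδ_def] at this; linarith
  have hnear : ∀ u ∈ Set.Icc c (c + δ), |u ^ (s - 1) - P| ≤ η / 2 := by
    intro u hu
    have hd : dist u c < δ0 := by
      rw [Real.dist_eq, abs_of_nonneg (by linarith [hu.1])]
      have := min_le_left (δ0 / 2) (L - c)
      simp only [← hδ_def] at this
      linarith [hu.2]
    exact le_of_lt (by simpa [Real.dist_eq] using hδ0P hd)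
  -- choose Z
  set A : ℝ := (2 * (Mf + P + 1)) / η with hA_def
  have hA0 : 0 < A := by positivity
  set Z : ℝ := max 1 (Real.log A / δ + 1) with hZ_def
  refine ⟨Z, lt_of_lt_of_le one_pos (le_max_left _ _), ?_⟩
  intro z hz
  have hz1 : 1 ≤ z := le_trans (le_max_left _ _) hz
  have hzpos : 0 < z := lt_of_lt_of_le one_pos hz1
  have hE : Real.exp (-z * δ) ≤ η / (2 * (Mf + P + 1)) := by
    have h1 : Real.log A / δ + 1 ≤ z := le_trans (le_max_right _ _) hz
    have h2 : Real.log A ≤ z * δ := by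
      rw [div_add' _ _ _ hδ.ne'] at h1
      rw [div_le_iff₀ hδ] at h1
      nlinarith
    have h3 : A ≤ Real.exp (z * δ) := by
      calc A = Real.exp (Real.log A) := (Real.exp_log (by linarith)).symm
        _ ≤ Real.exp (z * δ) := Real.exp_le_exp.mpr h2
    rw [neg_mul, Real.exp_neg]
    have h4 : (Real.exp (z * δ))⁻¹ ≤ A⁻¹ := by
      apply inv_anti₀ (by linarith) h3
    calc (Real.exp (z * δ))⁻¹ ≤ A⁻¹ := h4
      _ = η / (2 * (Mf + P + 1)) := by rw [hA_def, inv_div]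
  have hE' : Real.exp (-z * δ) * (2 * (Mf + P + 1)) ≤ η := by
    rw [← le_div_iff₀ (by positivity)]
    exact hE
  set e : ℝ := Real.exp (-z * δ) with he_def
  have he0 : 0 < e := Real.exp_pos _
  have he2 : e ≤ 1 := by
    rw [he_def, Real.exp_le_one_iff]
    nlinarith
  -- integrability
  have hcontf : ∀ p q, p ∈ Set.Icc c L → q ∈ Set.Icc c L →
      IntervalIntegrable (fun u => u ^ (s - 1) * Real.exp (-z * u)) volume p q := by
    intro p q hp hq
    apply ContinuousOn.intervalIntegrable
    intro u hu
    have hu' : u ∈ Set.Icc c L := Set.uIcc_subset_Icc hp hq hu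
    have hupos : 0 < u := lt_of_lt_of_le hc hu'.1
    exact ((Real.continuousAt_rpow_const u (s - 1) (Or.inl hupos.ne')).mul
      ((Real.continuous_exp.comp (continuous_const.mul continuous_id)).continuousAt)).continuousWithinAt
  have hexpint : ∀ (C p q : ℝ), IntervalIntegrable (fun u => C * Real.exp (-z * u)) volume p q :=
    fun C p q => (continuous_const.mul
      (Real.continuous_exp.comp (continuous_const.mul continuous_id))).intervalIntegrable p q
  have hmemc : c ∈ Set.Icc c L := Set.left_mem_Icc.mpr (le_of_lt hcL)
  have hmemd : c + δ ∈ Set.Icc c L := ⟨by linarith, hδL⟩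
  have hmemL : L ∈ Set.Icc c L := Set.right_mem_Icc.mpr (le_of_lt hcL)
  have hsplit : (∫ u in c..(c + δ), u ^ (s - 1) * Real.exp (-z * u)) +
      (∫ u in (c + δ)..L, u ^ (s - 1) * Real.exp (-z * u)) =
      ∫ u in c..L, u ^ (s - 1) * Real.exp (-z * u) :=
    intervalIntegral.integral_add_adjacent_intervals (hcontf _ _ hmemc hmemd) (hcontf _ _ hmemd hmemL)
  set I1 : ℝ := ∫ u in c..(c + δ), u ^ (s - 1) * Real.exp (-z * u) with hI1_def
  set I2 : ℝ := ∫ u in (c + δ)..L, u ^ (s - 1) * Real.exp (-z * u) with hI2_def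
  have hPhi : Phi a b s z = I1 + I2 := by rw [hI1_def, hI2_def, hsplit]; rfl
  set m : ℝ := max (P - η / 2) 0 with hm_def
  have hm1 : P - η / 2 ≤ m := le_max_left _ _
  have hm2 : m ≤ P := max_le (by linarith) hP.le
  have hm0 : 0 ≤ m := le_max_right _ _
  -- bounds on I1
  have hI1up : I1 ≤ (P + η / 2) * ((Real.exp (-z * c) - Real.exp (-z * (c + δ))) / z) := by
    rw [← integral_exp_neg_mul z _ _ hzpos.ne', ← intervalIntegral.integral_const_mul]
    apply intervalIntegral.integral_mono_on (by linarith) (hcontf _ _ hmemc hmemd) (hexpint _ _ _)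
    intro u hu
    have h := abs_le.mp (hnear u hu)
    exact mul_le_mul_of_nonneg_right (by linarith [h.2]) (Real.exp_pos _).le
  have hI1lo : m * ((Real.exp (-z * c) - Real.exp (-z * (c + δ))) / z) ≤ I1 := by
    rw [← integral_exp_neg_mul z _ _ hzpos.ne', ← intervalIntegral.integral_const_mul]
    apply intervalIntegral.integral_mono_on (by linarith) (hexpint _ _ _) (hcontf _ _ hmemc hmemd)
    intro u hu
    have h := abs_le.mp (hnear u hu)
    have hu0 : (0:ℝ) ≤ u := le_trans hc.le hu.1
    have : m ≤ u ^ (s - 1) := max_le (by linarith [h.1]) (Real.rpow_nonneg hu0 _)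
    exact mul_le_mul_of_nonneg_right this (Real.exp_pos _).le
  have hI2up : I2 ≤ Mf * ((Real.exp (-z * (c + δ)) - Real.exp (-z * L)) / z) := by
    rw [← integral_exp_neg_mul z _ _ hzpos.ne', ← intervalIntegral.integral_const_mul]
    apply intervalIntegral.integral_mono_on hδL (hcontf _ _ hmemd hmemL) (hexpint _ _ _)
    intro u hu
    have hu' : u ∈ Set.Icc c L := ⟨by linarith [hu.1], hu.2⟩
    exact mul_le_mul_of_nonneg_right (hfMf u hu') (Real.exp_pos _).le
  have hI2lo : 0 ≤ I2 := by
    apply intervalIntegral.integral_nonneg hδL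
    intro u hu
    have hu0 : (0:ℝ) ≤ u := by linarith [hu.1, hc.le, hδ.le]
    exact mul_nonneg (Real.rpow_nonneg hu0 _) (Real.exp_pos _).le
  -- exponential algebra
  have hG : 0 < Real.exp (z * c) := Real.exp_pos _
  have eG1 : Real.exp (z * c) * Real.exp (-z * c) = 1 := by
    rw [← Real.exp_add]
    norm_num
  have eG2 : Real.exp (z * c) * Real.exp (-z * (c + δ)) = e := by
    rw [he_def, ← Real.exp_add]
    congr 1
    ring
  have eq1 : z * Real.exp (z * c) * ((Real.exp (-z * c) - Real.exp (-z * (c + δ))) / z)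
      = 1 - e := by
    have h5 : z * Real.exp (z * c) * ((Real.exp (-z * c) - Real.exp (-z * (c + δ))) / z)
        = Real.exp (z * c) * Real.exp (-z * c) - Real.exp (z * c) * Real.exp (-z * (c + δ)) := by
      field_simp
    rw [h5, eG1, eG2]
  have eq2 : z * Real.exp (z * c) * ((Real.exp (-z * (c + δ)) - Real.exp (-z * L)) / z)
      ≤ e := by
    have h3 : (0:ℝ) < Real.exp (z * c) * Real.exp (-z * L) := by positivity
    have : z * Real.exp (z * c) * ((Real.exp (-z * (c + δ)) - Real.exp (-z * L)) / z)
        = Real.exp (z * c) * Real.exp (-z * (c + δ)) - Real.exp (z * c) * Real.exp (-z * L) := by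
      field_simp
    rw [this, eG2]
    linarith
  -- combine
  have hzG : 0 < z * Real.exp (z * c) := by positivity
  have hF1 : z * Real.exp (z * c) * I1 ≤ (P + η / 2) * (1 - e) := by
    calc z * Real.exp (z * c) * I1
        ≤ z * Real.exp (z * c) * ((P + η / 2) * ((Real.exp (-z * c) - Real.exp (-z * (c + δ))) / z)) :=
          mul_le_mul_of_nonneg_left hI1up hzG.le
      _ = (P + η / 2) * (z * Real.exp (z * c) * ((Real.exp (-z * c) - Real.exp (-z * (c + δ))) / z)) := by ring
      _ = (P + η / 2) * (1 - e) := by rw [eq1]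
  have hF1' : m * (1 - e) ≤ z * Real.exp (z * c) * I1 := by
    calc m * (1 - e) = m * (z * Real.exp (z * c) * ((Real.exp (-z * c) - Real.exp (-z * (c + δ))) / z)) := by rw [eq1]
      _ = z * Real.exp (z * c) * (m * ((Real.exp (-z * c) - Real.exp (-z * (c + δ))) / z)) := by ring
      _ ≤ z * Real.exp (z * c) * I1 := mul_le_mul_of_nonneg_left hI1lo hzG.le
  have hF2 : z * Real.exp (z * c) * I2 ≤ Mf * e := by
    calc z * Real.exp (z * c) * I2
        ≤ z * Real.exp (z * c) * (Mf * ((Real.exp (-z * (c + δ)) - Real.exp (-z * L)) / z)) :=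
          mul_le_mul_of_nonneg_left hI2up hzG.le
      _ = Mf * (z * Real.exp (z * c) * ((Real.exp (-z * (c + δ)) - Real.exp (-z * L)) / z)) := by ring
      _ ≤ Mf * e := mul_le_mul_of_nonneg_left eq2 hMf0.le
  have hF2' : 0 ≤ z * Real.exp (z * c) * I2 := mul_nonneg hzG.le hI2lo
  have hFsplit : z * Real.exp (z * c) * Phi a b s z
      = z * Real.exp (z * c) * I1 + z * Real.exp (z * c) * I2 := by rw [hPhi]; ring
  rw [abs_le]
  constructor
  · have hme : m * e ≤ P * e := mul_le_mul_of_nonneg_right hm2 he0.le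
    have hPe : P * e ≤ η / 2 := by
      linarith [hE', mul_nonneg (by linarith : (0:ℝ) ≤ Mf + 1) he0.le]
    have : P - η ≤ m * (1 - e) := by
      have hexp : m * (1 - e) = m - m * e := by ring
      linarith [hm1, hme, hPe, hexp]
    rw [hFsplit]
    linarith [this, hF1', hF2']
  · have hMfe : Mf * e ≤ η / 2 := by
      linarith [hE', mul_nonneg (by linarith : (0:ℝ) ≤ P + 1) he0.le]
    have hup : (P + η / 2) * (1 - e) ≤ P + η / 2 := by
      have hexp : (P + η / 2) * (1 - e) = (P + η / 2) - (P + η / 2) * e := by ring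
      linarith [mul_nonneg (by linarith : (0:ℝ) ≤ P + η / 2) he0.le, hexp]
    rw [hFsplit]
    linarith [hF1, hF2]

lemma Phi_pos_base (a b : ℝ) (ha : 0 < a) (hab : a < b) : (0:ℝ) < 1 / b ^ 2 ∧ 1 / b ^ 2 < 1 / a ^ 2 := by
  have hb : 0 < b := ha.trans hab
  constructor
  · positivity
  · apply div_lt_div_of_pos_left one_pos (by positivity)
    nlinarith

lemma Phi_integrand_integrable (a b s z : ℝ) (ha : 0 < a) (hab : a < b) :
    IntervalIntegrable (fun u => u ^ (s - 1) * Real.exp (-z * u)) volume (1 / b ^ 2) (1 / a ^ 2) := by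
  obtain ⟨hc, hcL⟩ := Phi_pos_base a b ha hab
  apply ContinuousOn.intervalIntegrable
  intro u hu
  rw [Set.uIcc_of_le hcL.le] at hu
  have hupos : 0 < u := lt_of_lt_of_le hc hu.1
  exact ((Real.continuousAt_rpow_const u (s - 1) (Or.inl hupos.ne')).mul
    ((Real.continuous_exp.comp (continuous_const.mul continuous_id)).continuousAt)).continuousWithinAt

lemma Phi_nonneg (a b s z : ℝ) (ha : 0 < a) (hab : a < b) : 0 ≤ Phi a b s z := by
  obtain ⟨hc, hcL⟩ := Phi_pos_base a b ha hab
  apply intervalIntegral.integral_nonneg hcL.le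
  intro u hu
  exact mul_nonneg (Real.rpow_nonneg (le_trans hc.le hu.1) _) (Real.exp_pos _).le

lemma Phi_le (a b s : ℝ) (ha : 0 < a) (hab : a < b) {z : ℝ} (hz : 0 ≤ z) :
    Phi a b s z ≤ (1 / a ^ 2 - 1 / b ^ 2) * max ((1 / b ^ 2) ^ (s - 1)) ((1 / a ^ 2) ^ (s - 1)) := by
  obtain ⟨hc, hcL⟩ := Phi_pos_base a b ha hab
  set Mf : ℝ := max ((1 / b ^ 2) ^ (s - 1)) ((1 / a ^ 2) ^ (s - 1)) with hMf_def
  have h1 : Phi a b s z ≤ ∫ _ in (1 / b ^ 2)..(1 / a ^ 2), Mf := by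
    apply intervalIntegral.integral_mono_on hcL.le (Phi_integrand_integrable a b s z ha hab)
      intervalIntegrable_const
    intro u hu
    have hupos : 0 < u := lt_of_lt_of_le hc hu.1
    have h2 : u ^ (s - 1) ≤ Mf := by
      rcases le_or_gt 0 (s - 1) with h | h
      · exact le_trans (Real.rpow_le_rpow hupos.le hu.2 h) (le_max_right _ _)
      · exact le_trans (Real.rpow_le_rpow_of_nonpos hc hu.1 h.le) (le_max_left _ _)
    have h3 : Real.exp (-z * u) ≤ 1 := Real.exp_le_one_iff.mpr (by nlinarith)
    calc u ^ (s - 1) * Real.exp (-z * u) ≤ u ^ (s - 1) * 1 :=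
          mul_le_mul_of_nonneg_left h3 (Real.rpow_nonneg hupos.le _)
      _ ≤ Mf := by rwa [mul_one]
  rwa [intervalIntegral.integral_const, smul_eq_mul] at h1

lemma Phi_anti (a b s : ℝ) (ha : 0 < a) (hab : a < b) : Antitone (Phi a b s) := by
  obtain ⟨hc, hcL⟩ := Phi_pos_base a b ha hab
  intro z1 z2 h
  apply intervalIntegral.integral_mono_on hcL.le (Phi_integrand_integrable a b s z2 ha hab)
    (Phi_integrand_integrable a b s z1 ha hab)
  intro u hu
  have hupos : 0 < u := lt_of_lt_of_le hc hu.1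
  apply mul_le_mul_of_nonneg_left _ (Real.rpow_nonneg hupos.le _)
  apply Real.exp_le_exp.mpr
  nlinarith

/-- The optimal model `s_*`. -/
noncomputable def sStar (d : ℕ) (μ : Measure (EuclideanSpace ℝ (Fin d)))
    (σε σT α : ℝ) (x : EuclideanSpace ℝ (Fin d)) : EuclideanSpace ℝ (Fin d) :=
  (∫ xt, Phi σε σT (((d : ℝ) + 2 * α - 2) / 2) (‖x - xt‖ ^ 2 / 2) ∂μ)⁻¹ •
    ∫ xt, Phi σε σT (((d : ℝ) + α) / 2) (‖x - xt‖ ^ 2 / 2) • (xt - x) ∂μ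

set_option maxHeartbeats 1000000 in
/-- For a compactly supported probability measure `μ_data`, `|s_*(x)|/|x|` converges
uniformly to `σ_T^{α-2}` as `|x| → ∞`. -/
theorem sStar_linear_growth (d : ℕ) (σε σT α : ℝ) (hσε : 0 < σε) (hσ : σε < σT)
    (μ : Measure (EuclideanSpace ℝ (Fin d))) [IsProbabilityMeasure μ]
    (hμ : ∃ K : Set (EuclideanSpace ℝ (Fin d)), IsCompact K ∧ μ Kᶜ = 0) :
    ∀ ε > 0, ∃ R : ℝ, ∀ x : EuclideanSpace ℝ (Fin d), R ≤ ‖x‖ →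
      |‖sStar d μ σε σT α x‖ / ‖x‖ - σT ^ (α - 2)| < ε := by
  intro ε hε
  obtain ⟨K, hK, hKc⟩ := hμ
  have hb : 0 < σT := hσε.trans hσ
  obtain ⟨M0, hM0⟩ := hK.isBounded.exists_norm_le
  set M : ℝ := max M0 0 with hM_def
  have hM0' : (0:ℝ) ≤ M := le_max_right _ _
  have hMK : ∀ y ∈ K, ‖y‖ ≤ M := fun y hy => le_trans (hM0 y hy) (le_max_left _ _)
  have hKae : ∀ᵐ xt ∂μ, xt ∈ K := by
    rw [MeasureTheory.ae_iff]
    exact hKc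
  set c : ℝ := 1 / σT ^ 2 with hc_def
  set s1 : ℝ := ((d:ℝ) + α) / 2 with hs1_def
  set s2 : ℝ := ((d:ℝ) + 2 * α - 2) / 2 with hs2_def
  set c1 : ℝ := c ^ (s1 - 1) with hc1_def
  set c2 : ℝ := c ^ (s2 - 1) with hc2_def
  have hc : 0 < c := by positivity
  have hc1 : 0 < c1 := Real.rpow_pos_of_pos hc _
  have hc2 : 0 < c2 := Real.rpow_pos_of_pos hc _
  have hratio : σT ^ (α - 2) = c1 / c2 := by
    have h1 : c1 / c2 = c ^ ((s1 - 1) - (s2 - 1)) := (Real.rpow_sub hc _ _).symm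
    have h2 : (s1 - 1) - (s2 - 1) = (2 - α) / 2 := by rw [hs1_def, hs2_def]; ring
    have h3 : c = σT ^ (-2 : ℝ) := by
      rw [hc_def, Real.rpow_neg hb.le, one_div, ← Real.rpow_natCast σT 2]
      norm_num
    rw [h1, h2, h3, ← Real.rpow_mul hb.le]
    congr 1
    ring
  set η : ℝ := min (c2 / 2) (ε * c2 ^ 2 / (4 * (2 * c2 + c1 + 1))) with hη_def
  have hη : 0 < η := lt_min (by positivity) (by positivity)
  have hη1 : η ≤ c2 / 2 := min_le_left _ _
  have hη2 : η ≤ ε * c2 ^ 2 / (4 * (2 * c2 + c1 + 1)) := min_le_right _ _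
  obtain ⟨Z1, hZ1pos, hZ1⟩ := Phi_key σε σT s1 hσε hσ hη
  obtain ⟨Z2, hZ2pos, hZ2⟩ := Phi_key σε σT s2 hσε hσ hη
  set Z : ℝ := max Z1 Z2 with hZ_def
  have hZpos : 0 < Z := lt_of_lt_of_le hZ1pos (le_max_left _ _)
  refine ⟨max (max (M + 1) (M + Real.sqrt (2 * Z))) (4 * c1 * M / (c2 * ε) + 1), ?_⟩
  intro x hx
  have hxM : M + 1 ≤ ‖x‖ :=
    le_trans (le_trans (le_max_left _ _) (le_max_left _ _)) hx
  have hxs : M + Real.sqrt (2 * Z) ≤ ‖x‖ :=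
    le_trans (le_trans (le_max_right _ _) (le_max_left _ _)) hx
  have hxR2 : 4 * c1 * M / (c2 * ε) + 1 ≤ ‖x‖ := le_trans (le_max_right _ _) hx
  have hx1 : 1 ≤ ‖x‖ := by linarith
  have hxpos : 0 < ‖x‖ := by linarith
  have hMX : M ≤ ‖x‖ := by linarith
  -- the functions
  set zf : EuclideanSpace ℝ (Fin d) → ℝ := fun xt => ‖x - xt‖ ^ 2 / 2 with hzf_def
  have hzf_cont : Continuous zf := by
    apply Continuous.div_const
    exact ((continuous_const.sub continuous_id).norm.pow 2)
  set w : EuclideanSpace ℝ (Fin d) → ℝ :=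
    fun xt => ((zf xt) * Real.exp (zf xt * c))⁻¹ with hw_def
  have hw_meas : Measurable w := by
    apply Measurable.inv
    exact (hzf_cont.measurable.mul
      ((Real.continuous_exp.comp (hzf_cont.mul continuous_const)).measurable))
  set g1 : EuclideanSpace ℝ (Fin d) → ℝ := fun xt => Phi σε σT s1 (zf xt) with hg1_def
  set g2 : EuclideanSpace ℝ (Fin d) → ℝ := fun xt => Phi σε σT s2 (zf xt) with hg2_def
  have hg1_meas : Measurable g1 := (Phi_anti σε σT s1 hσε hσ).measurable.comp hzf_cont.measurable
  have hg2_meas : Measurable g2 := (Phi_anti σε σT s2 hσε hσ).measurable.comp hzf_cont.measurable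
  -- pointwise facts on K
  have hzfK : ∀ xt ∈ K, Z ≤ zf xt ∧ zf xt ≤ (‖x‖ + M) ^ 2 / 2 := by
    intro xt hxt
    have h1 : ‖x‖ - ‖xt‖ ≤ ‖x - xt‖ := norm_sub_norm_le x xt
    have h2 : ‖x - xt‖ ≤ ‖x‖ + ‖xt‖ := norm_sub_le x xt
    have hxtM := hMK xt hxt
    have hs : Real.sqrt (2 * Z) ≤ ‖x - xt‖ := by linarith
    have hs0 : (0:ℝ) ≤ Real.sqrt (2 * Z) := Real.sqrt_nonneg _
    constructor
    · have h3 : Real.sqrt (2 * Z) ^ 2 ≤ ‖x - xt‖ ^ 2 := pow_le_pow_left₀ hs0 hs 2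
      rw [Real.sq_sqrt (by positivity)] at h3
      rw [hzf_def]
      dsimp only
      linarith
    · have h4 : ‖x - xt‖ ≤ ‖x‖ + M := by linarith
      have h5 : ‖x - xt‖ ^ 2 ≤ (‖x‖ + M) ^ 2 := pow_le_pow_left₀ (norm_nonneg _) h4 2
      rw [hzf_def]
      dsimp only
      linarith
  have hzfpos : ∀ xt ∈ K, 0 < zf xt := fun xt hxt => lt_of_lt_of_le hZpos (hzfK xt hxt).1
  have hwpos : ∀ xt ∈ K, 0 < w xt := by
    intro xt hxt
    have hzp := hzfpos xt hxt
    rw [hw_def]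
    dsimp only
    positivity
  have hzf0 : ∀ xt, 0 ≤ zf xt := by
    intro xt
    rw [hzf_def]
    positivity
  -- closeness
  have hclose : ∀ xt ∈ K, |g1 xt - c1 * w xt| ≤ η * w xt ∧ |g2 xt - c2 * w xt| ≤ η * w xt := by
    intro xt hxt
    have hzZ := (hzfK xt hxt).1
    have hz0 := hzfpos xt hxt
    have hE : 0 < zf xt * Real.exp (zf xt * c) := by positivity
    have hg1e : g1 xt = w xt * (zf xt * Real.exp (zf xt * c) * Phi σε σT s1 (zf xt)) := by
      rw [hw_def, hg1_def]
      field_simp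
    have hg2e : g2 xt = w xt * (zf xt * Real.exp (zf xt * c) * Phi σε σT s2 (zf xt)) := by
      rw [hw_def, hg2_def]
      field_simp
    have hwnn : 0 ≤ w xt := (hwpos xt hxt).le
    have hF1 := hZ1 (zf xt) (le_trans (le_max_left _ _) hzZ)
    have hF2 := hZ2 (zf xt) (le_trans (le_max_right _ _) hzZ)
    rw [← hc_def] at hF1 hF2
    constructor
    · have : g1 xt - c1 * w xt
          = w xt * (zf xt * Real.exp (zf xt * c) * Phi σε σT s1 (zf xt) - c1) := by
        rw [hg1e]; ring
      rw [this, abs_mul, abs_of_nonneg hwnn, mul_comm (η) (w xt)]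
      exact mul_le_mul_of_nonneg_left hF1 hwnn
    · have : g2 xt - c2 * w xt
          = w xt * (zf xt * Real.exp (zf xt * c) * Phi σε σT s2 (zf xt) - c2) := by
        rw [hg2e]; ring
      rw [this, abs_mul, abs_of_nonneg hwnn, mul_comm (η) (w xt)]
      exact mul_le_mul_of_nonneg_left hF2 hwnn
  -- integrability
  have hCb : ∀ s' : ℝ, ∃ C : ℝ, ∀ xt, |Phi σε σT s' (zf xt)| ≤ C := by
    intro s'
    refine ⟨(1 / σε ^ 2 - 1 / σT ^ 2) * max ((1 / σT ^ 2) ^ (s' - 1)) ((1 / σε ^ 2) ^ (s' - 1)), ?_⟩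
    intro xt
    rw [abs_of_nonneg (Phi_nonneg _ _ _ _ hσε hσ)]
    exact Phi_le σε σT s' hσε hσ (hzf0 xt)
  obtain ⟨C1, hC1⟩ := hCb s1
  obtain ⟨C2, hC2⟩ := hCb s2
  have hg2_int : Integrable g2 μ := by
    apply Integrable.mono' (integrable_const C2) hg2_meas.aestronglyMeasurable
    filter_upwards with xt
    rw [Real.norm_eq_abs]
    exact hC2 xt
  have hw_int : Integrable w μ := by
    apply Integrable.mono' (integrable_const Z⁻¹) hw_meas.aestronglyMeasurable
    filter_upwards [hKae] with xt hxt
    have hz0 := hzfpos xt hxt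
    have hzZ := (hzfK xt hxt).1
    rw [Real.norm_eq_abs, abs_of_nonneg (hwpos xt hxt).le, hw_def]
    dsimp only
    apply inv_anti₀ hZpos
    have h1 : 1 ≤ Real.exp (zf xt * c) := Real.one_le_exp (by positivity)
    calc Z ≤ zf xt := hzZ
      _ = zf xt * 1 := (mul_one _).symm
      _ ≤ zf xt * Real.exp (zf xt * c) := mul_le_mul_of_nonneg_left h1 hz0.le
  have hgv_int : Integrable (fun xt => g1 xt • (xt - x)) μ := by
    apply Integrable.mono' (μ := μ) (g := fun _ => C1 * (M + ‖x‖)) (integrable_const _)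
    · exact hg1_meas.aestronglyMeasurable.smul
        ((measurable_id.sub measurable_const).aestronglyMeasurable)
    · filter_upwards [hKae] with xt hxt
      rw [norm_smul, Real.norm_eq_abs]
      have h1 : ‖xt - x‖ ≤ M + ‖x‖ := by
        have h2 := norm_sub_le xt x
        have h3 := hMK xt hxt
        linarith
      exact mul_le_mul (hC1 xt) h1 (norm_nonneg _) (le_trans (abs_nonneg _) (hC1 xt))
  set W : ℝ := ∫ xt, w xt ∂μ with hW_def
  set D : ℝ := ∫ xt, g2 xt ∂μ with hD_def
  set N := ∫ xt, g1 xt • (xt - x) ∂μ with hN_def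
  -- W lower bound
  set B : ℝ := (‖x‖ + M) ^ 2 / 2 with hB_def
  have hB : 0 < B := by rw [hB_def]; positivity
  have hmW : (B * Real.exp (B * c))⁻¹ ≤ W := by
    have haeW : (fun _ : EuclideanSpace ℝ (Fin d) => (B * Real.exp (B * c))⁻¹) ≤ᵐ[μ] w := by
      filter_upwards [hKae] with xt hxt
      have hz0 := hzfpos xt hxt
      have hzB := (hzfK xt hxt).2
      rw [hw_def]
      dsimp only
      apply inv_anti₀ (by positivity)
      exact mul_le_mul hzB (Real.exp_le_exp.mpr (mul_le_mul_of_nonneg_right hzB hc.le))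
        (Real.exp_pos _).le hB.le
    have h := integral_mono_ae (integrable_const _) hw_int haeW
    simpa [integral_const, measure_univ] using h
  have hW_pos : 0 < W := lt_of_lt_of_le (by positivity) hmW
  -- D bounds
  have hD_close : |D - c2 * W| ≤ η * W := by
    have hsub : D - c2 * W = ∫ xt, (g2 xt - c2 * w xt) ∂μ := by
      rw [integral_sub hg2_int (hw_int.const_mul c2), integral_const_mul]
    rw [hsub, ← Real.norm_eq_abs]
    have h := norm_integral_le_of_norm_le (f := fun xt => g2 xt - c2 * w xt) (hw_int.const_mul η) ?bd
    case bd =>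
      filter_upwards [hKae] with xt hxt
      rw [Real.norm_eq_abs]
      exact (hclose xt hxt).2
    rwa [integral_const_mul] at h
  have hD_lb : (c2 - η) * W ≤ D := by
    have h := (abs_le.mp hD_close).1
    have hexp : (c2 - η) * W = c2 * W - η * W := by ring
    linarith
  have hD_pos : 0 < D := lt_of_lt_of_le (mul_pos (by linarith) hW_pos) hD_lb
  -- N bounds
  have hNc : ‖N + (c1 * W) • x‖ ≤ (η * (‖x‖ + M) + c1 * M) * W := by
    have hwc1x_int : Integrable (fun xt => (c1 * w xt) • x) μ := (hw_int.const_mul c1).smul_const x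
    have hint2 : ∫ xt, (c1 * w xt) • x ∂μ = (c1 * W) • x := by
      rw [integral_smul_const, integral_const_mul]
    have hsum : N + (c1 * W) • x = ∫ xt, (g1 xt • (xt - x) + (c1 * w xt) • x) ∂μ := by
      rw [integral_add hgv_int hwc1x_int, hint2]
    rw [hsum]
    have h := norm_integral_le_of_norm_le (f := fun xt => g1 xt • (xt - x) + (c1 * w xt) • x) (hw_int.const_mul (η * (‖x‖ + M) + c1 * M)) ?bd2
    case bd2 =>
      filter_upwards [hKae] with xt hxt
      have hw0 : 0 ≤ w xt := (hwpos xt hxt).le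
      have hxtM := hMK xt hxt
      have hvle : ‖xt - x‖ ≤ ‖x‖ + M := by
        have h2 := norm_sub_le xt x
        linarith
      have hid : g1 xt • (xt - x) + (c1 * w xt) • x
          = (g1 xt - c1 * w xt) • (xt - x) + (c1 * w xt) • xt := by
        module
      rw [hid]
      calc ‖(g1 xt - c1 * w xt) • (xt - x) + (c1 * w xt) • xt‖
          ≤ ‖(g1 xt - c1 * w xt) • (xt - x)‖ + ‖(c1 * w xt) • xt‖ := norm_add_le _ _
        _ = |g1 xt - c1 * w xt| * ‖xt - x‖ + |c1 * w xt| * ‖xt‖ := by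
            rw [norm_smul, norm_smul, Real.norm_eq_abs, Real.norm_eq_abs]
        _ ≤ (η * w xt) * (‖x‖ + M) + (c1 * w xt) * M := by
            apply add_le_add
            · exact mul_le_mul (hclose xt hxt).1 hvle (norm_nonneg _) (mul_nonneg hη.le hw0)
            · rw [abs_of_nonneg (mul_nonneg hc1.le hw0)]
              exact mul_le_mul_of_nonneg_left hxtM (mul_nonneg hc1.le hw0)
        _ = (η * (‖x‖ + M) + c1 * M) * w xt := by ring
    rwa [integral_const_mul] at h
  have hNb : |‖N‖ - c1 * W * ‖x‖| ≤ (η * (‖x‖ + M) + c1 * M) * W := by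
    have h := abs_norm_sub_norm_le N (-((c1 * W) • x))
    rw [sub_neg_eq_add, norm_neg, norm_smul, Real.norm_eq_abs,
      abs_of_pos (mul_pos hc1 hW_pos)] at h
    exact le_trans h hNc
  -- assemble
  have hsStar : sStar d μ σε σT α x = D⁻¹ • N := rfl
  have hnorm : ‖sStar d μ σε σT α x‖ = ‖N‖ / D := by
    rw [hsStar, norm_smul, Real.norm_eq_abs, abs_of_pos (inv_pos.mpr hD_pos), inv_mul_eq_div]
  rw [hnorm, hratio, div_div]
  have hDX : 0 < D * ‖x‖ := mul_pos hD_pos hxpos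
  have habs : |‖N‖ / (D * ‖x‖) - c1 / c2|
      = |‖N‖ * c2 - (D * ‖x‖) * c1| / ((D * ‖x‖) * c2) := by
    rw [div_sub_div _ _ (ne_of_gt hDX) (ne_of_gt hc2), abs_div,
      abs_of_pos (mul_pos hDX hc2)]
  rw [habs]
  have hnum : |‖N‖ * c2 - (D * ‖x‖) * c1|
      ≤ c2 * ((η * (‖x‖ + M) + c1 * M) * W) + (c1 * ‖x‖) * (η * W) := by
    have hid : ‖N‖ * c2 - (D * ‖x‖) * c1
        = c2 * (‖N‖ - c1 * W * ‖x‖) + (-(c1 * ‖x‖)) * (D - c2 * W) := by ring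
    rw [hid]
    refine le_trans (abs_add_le _ _) ?_
    rw [abs_mul, abs_mul, abs_of_pos hc2, abs_neg,
      abs_of_pos (mul_pos hc1 hxpos)]
    exact add_le_add (mul_le_mul_of_nonneg_left hNb hc2.le)
      (mul_le_mul_of_nonneg_left hD_close (by positivity))
  have hden : (c2 / 2 * W) * ‖x‖ * c2 ≤ (D * ‖x‖) * c2 := by
    have h1 : c2 / 2 * W ≤ D :=
      le_trans (mul_le_mul_of_nonneg_right (by linarith) hW_pos.le) hD_lb
    have h2 : (c2 / 2 * W) * ‖x‖ ≤ D * ‖x‖ := mul_le_mul_of_nonneg_right h1 hxpos.le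
    exact mul_le_mul_of_nonneg_right h2 hc2.le
  have hden_pos : 0 < (c2 / 2 * W) * ‖x‖ * c2 := mul_pos (mul_pos (mul_pos (half_pos hc2) hW_pos) hxpos) hc2
  refine lt_of_le_of_lt (div_le_div₀ (add_nonneg (mul_nonneg hc2.le (mul_nonneg (add_nonneg
    (mul_nonneg hη.le (by linarith)) (mul_nonneg hc1.le hM0')) hW_pos.le))
    (mul_nonneg (mul_nonneg hc1.le (norm_nonneg x)) (mul_nonneg hη.le hW_pos.le)))
    hnum hden_pos hden) ?_
  rw [div_lt_iff₀ hden_pos]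
  -- final numeric inequality
  have hη2' : η * (4 * (2 * c2 + c1 + 1)) ≤ ε * c2 ^ 2 := by
    rw [← le_div_iff₀ (by linarith : (0:ℝ) < 4 * (2 * c2 + c1 + 1))]
    exact hη2
  have hX4 : 4 * c1 * M ≤ (‖x‖ - 1) * (c2 * ε) := by
    have h' : 4 * c1 * M / (c2 * ε) ≤ ‖x‖ - 1 := by linarith
    exact (div_le_iff₀ (mul_pos hc2 hε)).mp h'
  have hstep : c2 * (η * (‖x‖ + M) + c1 * M) + c1 * ‖x‖ * η
      < ε * (c2 / 2 * ‖x‖ * c2) := by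
    have h1 : η * (4 * (2 * c2 + c1 + 1)) * ‖x‖ ≤ ε * c2 ^ 2 * ‖x‖ :=
      mul_le_mul_of_nonneg_right hη2' hxpos.le
    have h3 : c2 * η * M ≤ c2 * η * ‖x‖ := mul_le_mul_of_nonneg_left hMX (mul_pos hc2 hη).le
    have h2' : (4 * c1 * M) * c2 ≤ ((‖x‖ - 1) * (c2 * ε)) * c2 :=
      mul_le_mul_of_nonneg_right hX4 hc2.le
    have h4 : 0 < η * ‖x‖ := mul_pos hη hxpos
    have h5 : 0 < c2 ^ 2 * ε := mul_pos (pow_pos hc2 2) hε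
    linarith only [h1, h3, h2', h4, h5]
  calc c2 * ((η * (‖x‖ + M) + c1 * M) * W) + (c1 * ‖x‖) * (η * W)
      = (c2 * (η * (‖x‖ + M) + c1 * M) + c1 * ‖x‖ * η) * W := by ring
    _ < (ε * (c2 / 2 * ‖x‖ * c2)) * W := mul_lt_mul_of_pos_right hstep hW_pos
    _ = ε * ((c2 / 2 * W) * ‖x‖ * c2) := by ring
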